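/- arXiv:2210.03006 — 2 statements merged into one kernel-verified Lean document; each statement's English description precedes it below -/
import Mathlib

section
/- Let n, k ≥ 1, and let α > 0 with α ≤ n^{k−1}. For each e ∈ [n]^k let f_e : {−1,1}^n → [−1,1] be an arbitrary fixed function, let (X_e)_{e∈[n]^k} be i.i.d. Poisson(α/n^{k−1}) random variables, and set H(σ) = (1/α) Σ_{e∈[n]^k} X_e·f_e(σ). Then for all x ≥ 0: P(|max_{σ∈{−1,1}^n} H(σ) − E[max_{σ∈{−1,1}^n} H(σ)]| ≥ x) ≤ 2·exp(−x²·α/(4·(n + x))). -/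
open MeasureTheory ProbabilityTheory Real
open scoped NNReal ENNReal

noncomputable section

lemma exp_quad_le (c : ℝ) (hc : 0 ≤ c) : 1 + c + c^2/2 ≤ Real.exp c := by
  have h := Real.sum_le_exp_of_nonneg hc 3
  simp [Finset.sum_range_succ, Nat.factorial] at h
  nlinarith [h]

lemma exp_neg_le_quad (w : ℝ) (hw0 : 0 ≤ w) : Real.exp (-w) ≤ 1 - w + w^2/2 := by
  have h4 := Real.sum_le_exp_of_nonneg hw0 4
  simp [Finset.sum_range_succ, Nat.factorial] at h4
  have hpos : (0:ℝ) < 1 - w + w^2/2 := by nlinarith [sq_nonneg (w - 1)]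
  rw [Real.exp_neg, inv_le_iff_one_le_mul₀ (Real.exp_pos w)]
  have hmul := mul_le_mul_of_nonneg_left h4 hpos.le
  have hexp2 : (1:ℝ) ≤ (1 - w + w^2/2) * (1 + w + w^2/2 + w^3/6) := by
    nlinarith [pow_nonneg hw0 3, pow_nonneg hw0 4, pow_nonneg hw0 5]
  linarith

lemma exp_le_quad (z : ℝ) (hz : z ≤ 0) : Real.exp z ≤ 1 + z + z^2/2 := by
  have := exp_neg_le_quad (-z) (by linarith)
  simpa using this.trans_eq (by ring)

/-- pointwise bound: `e^z ≤ 1 + z + (e^c - 1 - c)` when `|z| ≤ c`. -/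
lemma exp_le_one_add_add (z c : ℝ) (hz : |z| ≤ c) :
    Real.exp z ≤ 1 + z + (Real.exp c - 1 - c) := by
  have hc : 0 ≤ c := le_trans (abs_nonneg z) hz
  rcases le_or_gt 0 z with h0 | h0
  · have hzc : z ≤ c := le_trans (le_abs_self z) hz
    have h2 : Real.exp c = Real.exp z * Real.exp (c - z) := by
      rw [← Real.exp_add]; ring_nf
    nlinarith [Real.add_one_le_exp (c - z), Real.exp_pos z, Real.one_le_exp h0]
  · have h1 : Real.exp z ≤ 1 + z + z^2/2 := exp_le_quad z h0.le
    have hzc : -c ≤ z := neg_le_of_abs_le hz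
    have h2 : z^2 ≤ c^2 := by nlinarith
    have h3 := exp_quad_le c hc
    linarith

lemma keyPoly (s : ℝ) (hs : 0 ≤ s) :
    (1 - 2*s) * ((s + s^2/2 + (2/9)*s^3) + (s + s^2/2 + (2/9)*s^3)^2/2
      + (2/9)*(s + s^2/2 + (2/9)*s^3)^3 - s) ≤ s^2 := by
  nlinarith [pow_nonneg hs 3, pow_nonneg hs 4, pow_nonneg hs 5, pow_nonneg hs 6,
    pow_nonneg hs 7, pow_nonneg hs 8, pow_nonneg hs 9, pow_nonneg hs 10]

section Poisson
variable (r : ℝ≥0)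

lemma hasSum_exp_poisson (s : ℝ) :
    HasSum (fun j : ℕ => Real.exp (s * j) * poissonPMFReal r j)
      (Real.exp ((r : ℝ) * (Real.exp s - 1))) := by
  have h := NormedSpace.expSeries_div_hasSum_exp (𝔸 := ℝ) ((r : ℝ) * Real.exp s)
  rw [← Real.exp_eq_exp_ℝ] at h
  have h2 := h.mul_left (Real.exp (-(r : ℝ)))
  have heq : (fun j : ℕ => Real.exp (-(r:ℝ)) * (((r:ℝ) * Real.exp s) ^ j / (j.factorial : ℝ)))
      = fun j : ℕ => Real.exp (s * j) * poissonPMFReal r j := by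
    funext j
    unfold poissonPMFReal
    rw [mul_pow, ← Real.exp_nat_mul, mul_comm s (j:ℝ)]
    ring
  have hval : Real.exp (-(r:ℝ)) * Real.exp ((r:ℝ) * Real.exp s)
      = Real.exp ((r : ℝ) * (Real.exp s - 1)) := by
    rw [← Real.exp_add]; ring_nf
  rw [hval] at h2
  exact heq ▸ h2

lemma hasSum_one_poisson : HasSum (fun j : ℕ => poissonPMFReal r j) 1 := poissonPMFRealSum r

lemma hasSum_mean_poisson :
    HasSum (fun j : ℕ => (j : ℝ) * poissonPMFReal r j) (r : ℝ) := by
  have h0 : HasSum (fun m : ℕ => (r : ℝ) * poissonPMFReal r m) ((r:ℝ) * 1) :=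
    (hasSum_one_poisson r).mul_left _
  have heq : (fun m : ℕ => (r : ℝ) * poissonPMFReal r m)
      = fun m : ℕ => ((m + 1 : ℕ) : ℝ) * poissonPMFReal r (m + 1) := by
    funext m
    unfold poissonPMFReal
    rw [Nat.factorial_succ]
    push_cast
    field_simp
    ring
  rw [heq] at h0
  have := (hasSum_nat_add_iff (f := fun j : ℕ => (j : ℝ) * poissonPMFReal r j) 1).mp h0
  simpa using this

lemma poisson_meas_singleton (j : ℕ) :
    (poissonPMF r).toMeasure {j} = ENNReal.ofReal (poissonPMFReal r j) := by
  rw [PMF.toMeasure_apply_singleton _ _ (measurableSet_singleton j)]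
  rfl

lemma integrable_poisson_of_summable {h : ℕ → ℝ}
    (H : Summable fun j => |h j| * poissonPMFReal r j) :
    Integrable h (poissonPMF r).toMeasure := by
  refine ⟨(measurable_of_countable h).aestronglyMeasurable, ?_⟩
  rw [HasFiniteIntegral, lintegral_countable']
  have : ∀ j : ℕ, ‖h j‖ₑ * (poissonPMF r).toMeasure {j}
      = ENNReal.ofReal (|h j| * poissonPMFReal r j) := by
    intro j
    rw [poisson_meas_singleton, Real.enorm_eq_ofReal_abs,
      ENNReal.ofReal_mul (abs_nonneg _)]
  simp_rw [this]
  rw [← ENNReal.ofReal_tsum_of_nonneg (fun j => mul_nonneg (abs_nonneg _) poissonPMFReal_nonneg) H]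
  exact ENNReal.ofReal_lt_top

lemma integral_poisson_eq_tsum {h : ℕ → ℝ} (hi : Integrable h (poissonPMF r).toMeasure) :
    ∫ j, h j ∂(poissonPMF r).toMeasure = ∑' j, h j * poissonPMFReal r j := by
  rw [integral_countable' hi]
  congr 1
  funext j
  rw [measureReal_def, poisson_meas_singleton, ENNReal.toReal_ofReal poissonPMFReal_nonneg, smul_eq_mul, mul_comm]

end Poisson

/-- Bernstein-type exponent for one Poisson coordinate. -/
noncomputable def pB (r : ℝ≥0) (c t : ℝ) : ℝ :=
  Real.exp ((r:ℝ) * (Real.exp (t*c) - 1)) - 1 - t*c*(r:ℝ)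

section OneDim
variable (r : ℝ≥0) {c t : ℝ} {h : ℕ → ℝ}

lemma onedim_integrable (hc : 0 ≤ c)
    (hL : ∀ a b : ℕ, |h a - h b| ≤ c * |(a:ℝ) - (b:ℝ)|) :
    Integrable h (poissonPMF r).toMeasure := by
  apply integrable_poisson_of_summable r
  have hb : ∀ j : ℕ, |h j| * poissonPMFReal r j
      ≤ |h 0| * poissonPMFReal r j + c * ((j:ℝ) * poissonPMFReal r j) := by
    intro j
    have h1 : |h j| ≤ |h 0| + c * j := by
      have := hL j 0
      simp at this
      calc |h j| ≤ |h j - h 0| + |h 0| := by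
            have := abs_sub_abs_le_abs_sub (h j) (h 0); linarith [abs_nonneg (h 0), abs_add_le (h j - h 0) (h 0), abs_sub_abs_le_abs_sub (h j) (h 0)]
        _ ≤ c * j + |h 0| := by
            have h2 : |h j - h 0| ≤ c * j := by simpa using hL j 0
            linarith
        _ = |h 0| + c * j := by ring
    have hp : 0 ≤ poissonPMFReal r j := poissonPMFReal_nonneg
    nlinarith [hp, abs_nonneg (h j)]
  apply Summable.of_nonneg_of_le
    (fun j => mul_nonneg (abs_nonneg _) poissonPMFReal_nonneg) hb
  exact ((poissonPMFRealSum r).summable.mul_left _).add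
    (((hasSum_mean_poisson r).summable.mul_left c))

lemma onedim_bound (hc : 0 ≤ c) (ht : 0 ≤ t)
    (hL : ∀ a b : ℕ, |h a - h b| ≤ c * |(a:ℝ) - (b:ℝ)|) :
    ∫⁻ j, ENNReal.ofReal (Real.exp (t * h j)) ∂(poissonPMF r).toMeasure
      ≤ ENNReal.ofReal (Real.exp (t * ∫ j, h j ∂(poissonPMF r).toMeasure + pB r c t)) := by
  classical
  set p : ℕ → ℝ := fun j => poissonPMFReal r j with hp
  have hpnn : ∀ j, 0 ≤ p j := fun j => poissonPMFReal_nonneg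
  set u : ℕ → ℝ := fun j => h j - h 0 with hudef
  have hu : ∀ j : ℕ, |u j| ≤ c * j := by
    intro j; simpa using hL j 0
  -- summability facts
  have S1 : HasSum p 1 := poissonPMFRealSum r
  have S2 : HasSum (fun j : ℕ => (j:ℝ) * p j) (r:ℝ) := hasSum_mean_poisson r
  have S3 : HasSum (fun j : ℕ => Real.exp (t*c*j) * p j)
      (Real.exp ((r:ℝ) * (Real.exp (t*c) - 1))) := hasSum_exp_poisson r (t*c)
  have Su : Summable (fun j : ℕ => u j * p j) := by
    apply Summable.of_abs
    apply Summable.of_nonneg_of_le (fun j => abs_nonneg _)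
      (fun j => ?_) ((S2.summable).mul_left c)
    rw [abs_mul, abs_of_nonneg (hpnn j)]
    have := hu j
    have := hpnn j
    calc |u j| * p j ≤ (c * j) * p j := by nlinarith [abs_nonneg (u j)]
      _ = c * ((j:ℝ) * p j) := by ring
  set U : ℝ := ∑' j, u j * p j with hU
  -- the mean
  have hint : Integrable h (poissonPMF r).toMeasure := onedim_integrable r hc hL
  have hmean : ∫ j, h j ∂(poissonPMF r).toMeasure = h 0 + U := by
    rw [integral_poisson_eq_tsum r hint]
    have : (fun j : ℕ => h j * p j) = fun j => h 0 * p j + u j * p j := by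
      funext j; simp only [hudef]; ring
    rw [this, Summable.tsum_add (S1.summable.mul_left _) Su, tsum_mul_left, S1.tsum_eq, hU, mul_one]
  -- termwise bound
  have hterm : ∀ j : ℕ, Real.exp (t * h j) * p j
      ≤ Real.exp (t * h 0) * ((t * (u j * p j)) + Real.exp (t*c*j) * p j - (t*c) * ((j:ℝ) * p j)) := by
    intro j
    have hz : |t * u j| ≤ t * c * j := by
      rw [abs_mul, abs_of_nonneg ht]
      have := hu j
      nlinarith [abs_nonneg (u j)]
    have hexp := exp_le_one_add_add (t * u j) (t*c*j) hz
    have hsplit : Real.exp (t * h j) = Real.exp (t * h 0) * Real.exp (t * u j) := by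
      rw [← Real.exp_add]; congr 1; simp only [hudef]; ring
    rw [hsplit]
    have h2 := mul_le_mul_of_nonneg_left (mul_le_mul_of_nonneg_right hexp (hpnn j))
      (Real.exp_pos (t * h 0)).le
    calc Real.exp (t * h 0) * Real.exp (t * u j) * p j
        = Real.exp (t * h 0) * (Real.exp (t * u j) * p j) := by ring
      _ ≤ Real.exp (t * h 0) * ((1 + t * u j + (Real.exp (t*c*j) - 1 - t*c*j)) * p j) := h2
      _ = Real.exp (t * h 0) * ((t * (u j * p j)) + Real.exp (t*c*j) * p j - (t*c) * ((j:ℝ) * p j)) := by ring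
  -- sum of the RHS
  have SR : HasSum (fun j : ℕ => Real.exp (t * h 0) *
      ((t * (u j * p j)) + Real.exp (t*c*j) * p j - (t*c) * ((j:ℝ) * p j)))
      (Real.exp (t * h 0) * (t * U + Real.exp ((r:ℝ) * (Real.exp (t*c) - 1)) - (t*c) * (r:ℝ))) := by
    exact (((Su.hasSum.mul_left t).add S3).sub (S2.mul_left (t*c))).mul_left _
  -- lintegral as tsum
  have hlhs : ∫⁻ j, ENNReal.ofReal (Real.exp (t * h j)) ∂(poissonPMF r).toMeasure
      = ∑' j : ℕ, ENNReal.ofReal (Real.exp (t * h j) * p j) := by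
    rw [lintegral_countable']
    congr 1; funext j
    rw [poisson_meas_singleton, ← ENNReal.ofReal_mul (Real.exp_pos _).le]
  rw [hlhs]
  have hstep : ∑' j : ℕ, ENNReal.ofReal (Real.exp (t * h j) * p j)
      ≤ ∑' j : ℕ, ENNReal.ofReal (Real.exp (t * h 0) *
        ((t * (u j * p j)) + Real.exp (t*c*j) * p j - (t*c) * ((j:ℝ) * p j))) :=
    ENNReal.tsum_le_tsum (fun j => ENNReal.ofReal_le_ofReal (hterm j))
  refine hstep.trans ?_
  have hnn : ∀ j : ℕ, 0 ≤ Real.exp (t * h 0) *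
      ((t * (u j * p j)) + Real.exp (t*c*j) * p j - (t*c) * ((j:ℝ) * p j)) := by
    intro j
    exact le_trans (mul_nonneg (Real.exp_pos _).le (hpnn j)) (hterm j)
  rw [← ENNReal.ofReal_tsum_of_nonneg hnn SR.summable, SR.tsum_eq]
  apply ENNReal.ofReal_le_ofReal
  -- final real inequality
  rw [hmean]
  have h1 : t * U + Real.exp ((r:ℝ) * (Real.exp (t*c) - 1)) - (t*c) * (r:ℝ)
      = 1 + (t * U + pB r c t) := by unfold pB; ring
  rw [h1]
  have h2 : 1 + (t * U + pB r c t) ≤ Real.exp (t * U + pB r c t) := by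
    linarith [Real.add_one_le_exp (t * U + pB r c t)]
  calc Real.exp (t * h 0) * (1 + (t * U + pB r c t))
      ≤ Real.exp (t * h 0) * Real.exp (t * U + pB r c t) := by
        exact mul_le_mul_of_nonneg_left h2 (Real.exp_pos _).le
    _ = Real.exp (t * (h 0 + U) + pB r c t) := by rw [← Real.exp_add]; ring_nf

end OneDim

noncomputable def pim (r : ℝ≥0) (m : ℕ) : Measure (Fin m → ℕ) :=
  Measure.pi fun _ => (poissonPMF r).toMeasure

instance (r : ℝ≥0) (m : ℕ) : IsProbabilityMeasure (pim r m) := by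
  unfold pim; infer_instance

lemma integrable_coe_poisson (r : ℝ≥0) :
    Integrable (fun j : ℕ => (j : ℝ)) (poissonPMF r).toMeasure := by
  apply integrable_poisson_of_summable r
  have : (fun j : ℕ => |(j:ℝ)| * poissonPMFReal r j) = fun j : ℕ => (j:ℝ) * poissonPMFReal r j := by
    funext j; rw [abs_of_nonneg (Nat.cast_nonneg j)]
  rw [this]
  exact (hasSum_mean_poisson r).summable

lemma integrable_sum_coords (r : ℝ≥0) :
    ∀ m : ℕ, Integrable (fun y : Fin m → ℕ => ∑ i, (y i : ℝ)) (pim r m) := by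
  intro m
  induction m with
  | zero =>
    simpa using (integrable_const (0:ℝ) : Integrable _ (pim r 0))
  | succ m ih =>
    set e := MeasurableEquiv.piFinSuccAbove (fun _ : Fin (m+1) => ℕ) 0 with he
    have MP : MeasurePreserving e (pim r (m+1))
        (((poissonPMF r).toMeasure).prod (pim r m)) :=
      measurePreserving_piFinSuccAbove (fun _ : Fin (m+1) => (poissonPMF r).toMeasure) 0
    have h1 : Integrable (fun z : ℕ × (Fin m → ℕ) => (z.1 : ℝ))
        (((poissonPMF r).toMeasure).prod (pim r m)) := by
      have hmap : Measure.map Prod.fst (((poissonPMF r).toMeasure).prod (pim r m))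
          = (poissonPMF r).toMeasure := by
        rw [Measure.map_fst_prod]; simp
      have := integrable_coe_poisson r
      rw [← hmap] at this
      exact this.comp_measurable measurable_fst
    have h2 : Integrable (fun z : ℕ × (Fin m → ℕ) => ∑ i, (z.2 i : ℝ))
        (((poissonPMF r).toMeasure).prod (pim r m)) := by
      have hmap : Measure.map Prod.snd (((poissonPMF r).toMeasure).prod (pim r m))
          = pim r m := by
        rw [Measure.map_snd_prod]; simp
      have := ih
      rw [← hmap] at this
      exact this.comp_measurable measurable_snd
    have h3 : Integrable (fun z : ℕ × (Fin m → ℕ) => (z.1 : ℝ) + ∑ i, (z.2 i : ℝ))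
        (((poissonPMF r).toMeasure).prod (pim r m)) := h1.add h2
    have h4 := (MP.integrable_comp_emb e.measurableEmbedding
      (g := fun z : ℕ × (Fin m → ℕ) => (z.1 : ℝ) + ∑ i, (z.2 i : ℝ))).mpr h3
    have h5 : ((fun z : ℕ × (Fin m → ℕ) => (z.1 : ℝ) + ∑ i, (z.2 i : ℝ)) ∘ e)
        = fun y : Fin (m+1) → ℕ => ∑ i, (y i : ℝ) := by
      funext y
      simp only [Function.comp_apply, he, MeasurableEquiv.piFinSuccAbove_apply]
      rw [Fin.sum_univ_succAbove (fun i => ((y i : ℝ))) 0]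
      rfl
    rwa [h5] at h4

lemma integrable_lip (r : ℝ≥0) {c : ℝ} (hc : 0 ≤ c) {m : ℕ} {F : (Fin m → ℕ) → ℝ}
    (hL : ∀ x y : Fin m → ℕ, |F x - F y| ≤ c * ∑ i, |(x i : ℝ) - (y i : ℝ)|) :
    Integrable F (pim r m) := by
  have hbound : ∀ x : Fin m → ℕ, ‖F x‖ ≤ |F (fun _ => 0)| + c * ∑ i, (x i : ℝ) := by
    intro x
    have h1 := hL x (fun _ => 0)
    simp only [Nat.cast_zero, sub_zero] at h1
    have h2 : (∑ i, |(x i : ℝ)|) = ∑ i, (x i : ℝ) := by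
      apply Finset.sum_congr rfl; intro i _; exact abs_of_nonneg (Nat.cast_nonneg _)
    rw [h2] at h1
    have := abs_sub_abs_le_abs_sub (F x) (F (fun _ => 0))
    rw [Real.norm_eq_abs]
    linarith
  apply Integrable.mono' (((integrable_sum_coords r m).const_mul c).add (integrable_const |F (fun _ => 0)|))
    (measurable_of_countable F).aestronglyMeasurable
  filter_upwards with x
  calc ‖F x‖ ≤ |F (fun _ => 0)| + c * ∑ i, (x i : ℝ) := hbound x
    _ = c * ∑ i, (x i : ℝ) + |F (fun _ => 0)| := by ring

lemma tensor_bound (r : ℝ≥0) {c t : ℝ} (hc : 0 ≤ c) (ht : 0 ≤ t) :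
    ∀ (m : ℕ) (F : (Fin m → ℕ) → ℝ),
    (∀ x y : Fin m → ℕ, |F x - F y| ≤ c * ∑ i, |(x i : ℝ) - (y i : ℝ)|) →
    ∫⁻ x, ENNReal.ofReal (Real.exp (t * F x)) ∂(pim r m)
      ≤ ENNReal.ofReal (Real.exp (t * ∫ x, F x ∂(pim r m) + m * pB r c t)) := by
  intro m
  induction m with
  | zero =>
    intro F _
    have hconst : ∀ x : Fin 0 → ℕ, F x = F (fun i => i.elim0) := by
      intro x; congr 1; funext i; exact i.elim0
    have h1 : ∫⁻ x, ENNReal.ofReal (Real.exp (t * F x)) ∂(pim r 0)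
        = ENNReal.ofReal (Real.exp (t * F (fun i => i.elim0))) := by
      rw [show (fun x : Fin 0 → ℕ => ENNReal.ofReal (Real.exp (t * F x)))
          = fun _ => ENNReal.ofReal (Real.exp (t * F (fun i => i.elim0))) from
        funext fun x => by rw [hconst x]]
      simp [lintegral_const]
    have h2 : ∫ x, F x ∂(pim r 0) = F (fun i => i.elim0) := by
      rw [show (fun x : Fin 0 → ℕ => F x) = fun _ => F (fun i => i.elim0) from
        funext fun x => hconst x]
      simp [integral_const]
    rw [h1, h2]
    simp
  | succ m ih =>
    intro F hL
    set μ0 := (poissonPMF r).toMeasure with hμ0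
    set e := MeasurableEquiv.piFinSuccAbove (fun _ : Fin (m+1) => ℕ) 0 with he
    have MP : MeasurePreserving e (pim r (m+1)) (μ0.prod (pim r m)) :=
      measurePreserving_piFinSuccAbove (fun _ : Fin (m+1) => μ0) 0
    -- the sections
    set Fa : ℕ → (Fin m → ℕ) → ℝ := fun a y => F (e.symm (a, y)) with hFa
    have hcoords : ∀ (a : ℕ) (y : Fin m → ℕ),
        (e.symm (a, y) : Fin (m+1) → ℕ) 0 = a ∧
        ∀ j : Fin m, (e.symm (a, y) : Fin (m+1) → ℕ) ((0 : Fin (m+1)).succAbove j) = y j := by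
      intro a y
      constructor
      · simp [he, MeasurableEquiv.piFinSuccAbove]
      · intro j; simp [he, MeasurableEquiv.piFinSuccAbove]
    have hLa : ∀ a : ℕ, ∀ y y' : Fin m → ℕ,
        |Fa a y - Fa a y'| ≤ c * ∑ i, |(y i : ℝ) - (y' i : ℝ)| := by
      intro a y y'
      have h1 := hL (e.symm (a, y)) (e.symm (a, y'))
      have h2 : (∑ i, |((e.symm (a, y) : Fin (m+1) → ℕ) i : ℝ)
          - ((e.symm (a, y') : Fin (m+1) → ℕ) i : ℝ)|) = ∑ i, |(y i : ℝ) - (y' i : ℝ)| := by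
        rw [Fin.sum_univ_succAbove _ 0]
        rw [(hcoords a y).1, (hcoords a y').1]
        simp only [sub_self, abs_zero, zero_add]
        apply Finset.sum_congr rfl
        intro j _
        rw [(hcoords a y).2 j, (hcoords a y').2 j]
      rw [h2] at h1
      exact h1
    -- lintegral via the equivalence and Fubini
    have hmeas : Measurable (fun z : ℕ × (Fin m → ℕ) => ENNReal.ofReal (Real.exp (t * F (e.symm z)))) :=
      measurable_of_countable _
    have step1 : ∫⁻ x, ENNReal.ofReal (Real.exp (t * F x)) ∂(pim r (m+1))
        = ∫⁻ z, ENNReal.ofReal (Real.exp (t * F (e.symm z))) ∂(μ0.prod (pim r m)) := by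
      rw [← MP.map_eq, lintegral_map_equiv]
      simp
    have step2 : ∫⁻ z, ENNReal.ofReal (Real.exp (t * F (e.symm z))) ∂(μ0.prod (pim r m))
        = ∫⁻ a, ∫⁻ y, ENNReal.ofReal (Real.exp (t * Fa a y)) ∂(pim r m) ∂μ0 := by
      rw [lintegral_prod _ hmeas.aemeasurable]
    -- G and its properties
    set G : ℕ → ℝ := fun a => ∫ y, Fa a y ∂(pim r m) with hG
    have hIa : ∀ a : ℕ, Integrable (Fa a) (pim r m) := fun a => integrable_lip r hc (hLa a)
    have hLG : ∀ a b : ℕ, |G a - G b| ≤ c * |(a:ℝ) - (b:ℝ)| := by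
      intro a b
      have hdiff : ∀ y : Fin m → ℕ, |Fa a y - Fa b y| ≤ c * |(a:ℝ) - (b:ℝ)| := by
        intro y
        have h1 := hL (e.symm (a, y)) (e.symm (b, y))
        have h2 : (∑ i, |((e.symm (a, y) : Fin (m+1) → ℕ) i : ℝ)
            - ((e.symm (b, y) : Fin (m+1) → ℕ) i : ℝ)|) = |(a:ℝ) - (b:ℝ)| := by
          rw [Fin.sum_univ_succAbove _ 0]
          rw [(hcoords a y).1, (hcoords b y).1]
          have : ∀ j : Fin m, |((e.symm (a, y) : Fin (m+1) → ℕ) ((0:Fin (m+1)).succAbove j) : ℝ)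
              - ((e.symm (b, y) : Fin (m+1) → ℕ) ((0:Fin (m+1)).succAbove j) : ℝ)| = 0 := by
            intro j; rw [(hcoords a y).2 j, (hcoords b y).2 j]; simp
          rw [Finset.sum_congr rfl (fun j _ => this j)]
          simp
        rw [h2] at h1
        exact h1
      have h3 : G a - G b = ∫ y, (Fa a y - Fa b y) ∂(pim r m) := by
        rw [hG]; exact (integral_sub (hIa a) (hIa b)).symm
      rw [h3]
      calc |∫ y, (Fa a y - Fa b y) ∂(pim r m)| ≤ ∫ y, |Fa a y - Fa b y| ∂(pim r m) := by
            rw [← Real.norm_eq_abs]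
            refine (norm_integral_le_integral_norm _).trans_eq ?_
            simp [Real.norm_eq_abs]
        _ ≤ ∫ _ : Fin m → ℕ, c * |(a:ℝ) - (b:ℝ)| ∂(pim r m) := by
            apply integral_mono ((hIa a).sub (hIa b)).abs (integrable_const _)
            intro y
            exact hdiff y
        _ = c * |(a:ℝ) - (b:ℝ)| := by simp
    -- apply IH inside
    have step3 : ∫⁻ a, ∫⁻ y, ENNReal.ofReal (Real.exp (t * Fa a y)) ∂(pim r m) ∂μ0
        ≤ ∫⁻ a, ENNReal.ofReal (Real.exp (t * G a)) * ENNReal.ofReal (Real.exp (m * pB r c t)) ∂μ0 := by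
      apply lintegral_mono
      intro a
      calc ∫⁻ y, ENNReal.ofReal (Real.exp (t * Fa a y)) ∂(pim r m)
          ≤ ENNReal.ofReal (Real.exp (t * G a + m * pB r c t)) := ih (Fa a) (hLa a)
        _ = ENNReal.ofReal (Real.exp (t * G a)) * ENNReal.ofReal (Real.exp (m * pB r c t)) := by
            rw [← ENNReal.ofReal_mul (Real.exp_pos _).le, ← Real.exp_add]
    have step4 : ∫⁻ a, ENNReal.ofReal (Real.exp (t * G a)) * ENNReal.ofReal (Real.exp (m * pB r c t)) ∂μ0
        = (∫⁻ a, ENNReal.ofReal (Real.exp (t * G a)) ∂μ0) * ENNReal.ofReal (Real.exp (m * pB r c t)) := by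
      exact lintegral_mul_const _ (measurable_of_countable _)
    have step5 : (∫⁻ a, ENNReal.ofReal (Real.exp (t * G a)) ∂μ0)
        ≤ ENNReal.ofReal (Real.exp (t * ∫ a, G a ∂μ0 + pB r c t)) := onedim_bound r hc ht hLG
    -- identify the mean via Fubini
    have hIF : Integrable F (pim r (m+1)) := integrable_lip r hc hL
    have hIF' : Integrable (fun z : ℕ × (Fin m → ℕ) => F (e.symm z)) (μ0.prod (pim r m)) := by
      have := (MP.integrable_comp_emb e.measurableEmbedding
        (g := fun z : ℕ × (Fin m → ℕ) => F (e.symm z))).mp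
      apply this
      have heq : ((fun z : ℕ × (Fin m → ℕ) => F (e.symm z)) ∘ e) = F := by
        funext x; simp
      rwa [heq]
    have hmean : ∫ x, F x ∂(pim r (m+1)) = ∫ a, G a ∂μ0 := by
      have h1 : ∫ x, F x ∂(pim r (m+1)) = ∫ z, F (e.symm z) ∂(μ0.prod (pim r m)) := by
        have h := MP.integral_comp e.measurableEmbedding (fun z => F (e.symm z))
        simp only [MeasurableEquiv.symm_apply_apply] at h
        exact h
      rw [h1, integral_prod _ hIF']
    rw [step1, step2, hmean]
    calc ∫⁻ a, ∫⁻ y, ENNReal.ofReal (Real.exp (t * Fa a y)) ∂(pim r m) ∂μ0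
        ≤ (∫⁻ a, ENNReal.ofReal (Real.exp (t * G a)) ∂μ0) * ENNReal.ofReal (Real.exp (m * pB r c t)) := by
          rw [← step4]; exact step3
      _ ≤ ENNReal.ofReal (Real.exp (t * ∫ a, G a ∂μ0 + pB r c t)) * ENNReal.ofReal (Real.exp (m * pB r c t)) := by
          exact mul_le_mul_left step5 _
      _ = ENNReal.ofReal (Real.exp (t * ∫ a, G a ∂μ0 + (m+1 : ℕ) * pB r c t)) := by
          rw [← ENNReal.ofReal_mul (Real.exp_pos _).le, ← Real.exp_add]
          congr 2
          push_cast
          ring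

/-- cubic upper bound for `exp` on `[0,1]`. -/
lemma exp_cubic_bound {s : ℝ} (h0 : 0 ≤ s) (h1 : s ≤ 1) :
    Real.exp s ≤ 1 + s + s^2/2 + (2/9)*s^3 := by
  have habs : |s| ≤ 1 := abs_le.mpr ⟨by linarith, h1⟩
  have h := Real.exp_bound habs (by norm_num : (0:ℕ) < 3)
  simp [Finset.sum_range_succ, Nat.factorial] at h
  rw [abs_of_nonneg h0] at h
  have h2 := (abs_le.mp h).2
  have h3 : ((3:ℕ).succ : ℝ) / ((((3:ℕ).factorial : ℝ)) * 3) = 2/9 := by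
    norm_num [Nat.factorial]
  nlinarith [h2]

/-- One-sided Chernoff tail for Lipschitz-in-ℓ¹ functions of iid Poissons. -/
lemma tail_bound (r : ℝ≥0) {c t : ℝ} (hc : 0 ≤ c) (ht : 0 ≤ t) (N : ℕ)
    (F : (Fin N → ℕ) → ℝ)
    (hL : ∀ x y : Fin N → ℕ, |F x - F y| ≤ c * ∑ i, |(x i : ℝ) - (y i : ℝ)|) (x : ℝ) :
    (pim r N) {z | x ≤ F z - ∫ w, F w ∂(pim r N)}
      ≤ ENNReal.ofReal (Real.exp ((N:ℝ) * pB r c t - t * x)) := by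
  set m := ∫ w, F w ∂(pim r N) with hm
  set a : ℝ≥0∞ := ENNReal.ofReal (Real.exp (t * (m + x))) with ha
  have ha0 : a ≠ 0 := by
    simp [ha, Real.exp_pos]
  have haT : a ≠ ⊤ := by simp [ha]
  have hsub : {z : Fin N → ℕ | x ≤ F z - m}
      ⊆ {z : Fin N → ℕ | a ≤ ENNReal.ofReal (Real.exp (t * F z))} := by
    intro z hz
    simp only [Set.mem_setOf_eq] at hz ⊢
    apply ENNReal.ofReal_le_ofReal
    apply Real.exp_le_exp.mpr
    have : m + x ≤ F z := by linarith
    exact mul_le_mul_of_nonneg_left this ht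
  have hmarkov := mul_meas_ge_le_lintegral₀
    (μ := pim r N) (f := fun z => ENNReal.ofReal (Real.exp (t * F z)))
    (measurable_of_countable _).aemeasurable a
  have hmono := measure_mono (μ := pim r N) hsub
  have htensor := tensor_bound r hc ht N F hL
  have hchain : a * (pim r N) {z | x ≤ F z - m}
      ≤ ENNReal.ofReal (Real.exp (t * m + (N:ℝ) * pB r c t)) := by
    calc a * (pim r N) {z | x ≤ F z - m}
        ≤ a * (pim r N) {z | a ≤ ENNReal.ofReal (Real.exp (t * F z))} := by
          exact mul_le_mul_right hmono a
      _ ≤ ∫⁻ z, ENNReal.ofReal (Real.exp (t * F z)) ∂(pim r N) := hmarkov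
      _ ≤ ENNReal.ofReal (Real.exp (t * m + (N:ℝ) * pB r c t)) := htensor
  have hdiv : (pim r N) {z | x ≤ F z - m}
      ≤ ENNReal.ofReal (Real.exp (t * m + (N:ℝ) * pB r c t)) / a := by
    rw [ENNReal.le_div_iff_mul_le (Or.inl ha0) (Or.inl haT), mul_comm]
    exact hchain
  refine hdiv.trans ?_
  rw [ha, ← ENNReal.ofReal_div_of_pos (Real.exp_pos _), ← Real.exp_sub]
  apply ENNReal.ofReal_le_ofReal
  apply Real.exp_le_exp.mpr
  ring_nf
  exact le_refl _

lemma sup'_sub_sup'_le {β : Type*} (s : Finset β) (hs : s.Nonempty) (f g : β → ℝ) (d : ℝ)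
    (h : ∀ b ∈ s, f b - g b ≤ d) : s.sup' hs f - s.sup' hs g ≤ d := by
  rw [sub_le_iff_le_add]
  apply Finset.sup'_le
  intro b hb
  have h1 := h b hb
  have h2 := Finset.le_sup' g hb
  linarith

lemma abs_sup'_sub_sup'_le {β : Type*} (s : Finset β) (hs : s.Nonempty) (f g : β → ℝ) (d : ℝ)
    (h : ∀ b ∈ s, |f b - g b| ≤ d) : |s.sup' hs f - s.sup' hs g| ≤ d := by
  rw [abs_le]
  constructor
  · have := sup'_sub_sup'_le s hs g f d (fun b hb => by
      have := h b hb; rw [abs_le] at this; linarith)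
    linarith
  · exact sup'_sub_sup'_le s hs f g d (fun b hb => by
      have := h b hb; rw [abs_le] at this; linarith)

set_option maxHeartbeats 2000000 in
lemma final_core (n x α : ℝ) (N_ : ℝ) (r : ℝ≥0) (s : ℝ)
    (hα : 0 < α) (hx : 0 ≤ x)
    (hN0 : 0 ≤ N_) (hr1 : (r:ℝ) ≤ 1) (hNr : N_ * (r:ℝ) = α * n)
    (hs0 : 0 ≤ s) (hs2 : 2*s ≤ 1) (hnx : 0 < n + x)
    (h1s : (1 - 2*s) * (n + x) = n)
    (hsx : s * x = 2 * (x^2 / (4*(n+x))))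
    (hs6 : (n + x) * s^2 = x^2 / (4*(n+x))) :
    N_ * pB r α⁻¹ (α * s) - (α * s) * x ≤ -(x^2*α) / (4*(n+x)) := by
  have htc : (α * s) * α⁻¹ = s := by field_simp
  have hr0 : (0:ℝ) ≤ (r:ℝ) := r.coe_nonneg
  obtain ⟨y, hy⟩ : ∃ y : ℝ, y = Real.exp s - 1 := ⟨_, rfl⟩
  have hy0 : 0 ≤ y := by
    rw [hy]; linarith [Real.one_le_exp hs0]
  have hpBeq : pB r α⁻¹ (α * s) = Real.exp ((r:ℝ) * y) - 1 - s * (r:ℝ) := by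
    unfold pB
    rw [htc, ← hy]
  -- convexity bound  e^{ry} ≤ 1 - r + r e^y
  have hconv : Real.exp ((r:ℝ) * y) ≤ (1 - (r:ℝ)) + (r:ℝ) * Real.exp y := by
    have h := convexOn_exp.2 (Set.mem_univ (0:ℝ)) (Set.mem_univ y)
      (by linarith : (0:ℝ) ≤ 1 - (r:ℝ)) hr0 (by ring)
    simp only [smul_eq_mul, mul_zero, zero_add, Real.exp_zero, mul_one] at h
    linarith [h]
  obtain ⟨G, hG⟩ : ∃ G : ℝ, G = Real.exp y - 1 - s := ⟨_, rfl⟩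
  have hpB : pB r α⁻¹ (α * s) ≤ (r:ℝ) * G := by
    rw [hpBeq, hG]; nlinarith [hconv]
  have hNpB : N_ * pB r α⁻¹ (α * s) ≤ α * n * G := by
    calc N_ * pB r α⁻¹ (α * s) ≤ N_ * ((r:ℝ) * G) := mul_le_mul_of_nonneg_left hpB hN0
      _ = (N_ * (r:ℝ)) * G := by ring
      _ = α * n * G := by rw [hNr]
  -- core inequality:  n * G ≤ x^2 / (4*(n+x))
  have hq : y ≤ s + s^2/2 + (2/9)*s^3 := by
    rw [hy]
    have := exp_cubic_bound hs0 (by linarith)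
    linarith
  have hq1 : s + s^2/2 + (2/9)*s^3 ≤ 1 := by nlinarith [pow_nonneg hs0 3, sq_nonneg s]
  have hy1 : y ≤ 1 := hq.trans hq1
  have hGb : G ≤ (s + s^2/2 + (2/9)*s^3) + (s + s^2/2 + (2/9)*s^3)^2/2
      + (2/9)*(s + s^2/2 + (2/9)*s^3)^3 - s := by
    have hqnn : 0 ≤ s + s^2/2 + (2/9)*s^3 := by positivity
    have hexp := exp_cubic_bound hy0 hy1
    have hsq : y^2 ≤ (s + s^2/2 + (2/9)*s^3)^2 := by nlinarith
    have hcu : y^3 ≤ (s + s^2/2 + (2/9)*s^3)^3 := by nlinarith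
    rw [hG]; linarith
  have key := keyPoly s hs0
  have hcore : n * G ≤ x^2 / (4*(n+x)) := by
    have h3 : (1 - 2*s) * G ≤ (1 - 2*s) * ((s + s^2/2 + (2/9)*s^3) + (s + s^2/2 + (2/9)*s^3)^2/2
        + (2/9)*(s + s^2/2 + (2/9)*s^3)^3 - s) :=
      mul_le_mul_of_nonneg_left hGb (by linarith)
    have h2 : (1 - 2*s) * G ≤ s^2 := h3.trans key
    have h4 : n * G = (n + x) * ((1 - 2*s) * G) := by
      linear_combination (-G) * h1s
    have h5 : (n + x) * ((1 - 2*s) * G) ≤ (n + x) * s^2 :=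
      mul_le_mul_of_nonneg_left h2 hnx.le
    rw [h4]
    rw [← hs6]
    exact h5
  have hmain : n * G - s * x ≤ -(x^2 / (4*(n+x))) := by
    rw [hsx]
    linarith
  have hend : α * (n * G - s * x) ≤ α * (-(x^2 / (4*(n+x)))) :=
    mul_le_mul_of_nonneg_left hmain hα.le
  calc N_ * pB r α⁻¹ (α * s) - (α * s) * x ≤ α * n * G - α * s * x := by linarith
    _ = α * (n * G - s * x) := by ring
    _ ≤ α * (-(x^2 / (4*(n+x)))) := hend
    _ = -(x^2*α) / (4*(n+x)) := by
        rw [neg_div, mul_neg]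
        congr 1
        rw [mul_div_assoc]
        ring

/-- The law of the Poisson clause multiplicities: i.i.d. `Poisson(α/n^(k-1))` indexed
by `e ∈ [n]^k`. -/
def poisMultMeasure (n k : ℕ) (α : ℝ) : Measure ((Fin k → Fin n) → ℕ) :=
  Measure.pi fun _ => (poissonPMF (α / (n : ℝ) ^ (k - 1)).toNNReal).toMeasure

set_option maxHeartbeats 1000000 in
/-- Concentration of `max_σ H(σ)` for the Poisson-model random CSP
`H(σ) = (1/α) Σ_e X_e f_e(σ)`. -/
theorem poisson_max_concentration (n k : ℕ) (hn : 1 ≤ n) (hk : 1 ≤ k)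
    (α : ℝ) (hα : 0 < α) (hαn : α ≤ (n : ℝ) ^ (k - 1))
    (fe : (Fin k → Fin n) → (Fin n → Bool) → ℝ)
    (hfe : ∀ e σ, fe e σ ∈ Set.Icc (-1 : ℝ) 1) (x : ℝ) (hx : 0 ≤ x) :
    poisMultMeasure n k α
        {X | x ≤ |Finset.univ.sup' Finset.univ_nonempty
              (fun σ : Fin n → Bool => α⁻¹ * ∑ e : Fin k → Fin n, (X e : ℝ) * fe e σ) -
            ∫ Y, Finset.univ.sup' Finset.univ_nonempty
              (fun σ : Fin n → Bool => α⁻¹ * ∑ e : Fin k → Fin n, (Y e : ℝ) * fe e σ)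
              ∂ poisMultMeasure n k α|}
      ≤ ENNReal.ofReal (2 * Real.exp (-(x ^ 2 * α) / (4 * ((n : ℝ) + x)))) := by
  classical
  have hn0 : (0:ℝ) < n := by
    have : (1:ℝ) ≤ n := by exact_mod_cast hn
    linarith
  have hpow0 : (0:ℝ) < (n:ℝ)^(k-1) := pow_pos hn0 _
  set r : ℝ≥0 := (α / (n : ℝ) ^ (k - 1)).toNNReal with hr
  have hrR : (r:ℝ) = α / (n:ℝ)^(k-1) := Real.coe_toNNReal _ (div_pos hα hpow0).le
  have hr1 : (r:ℝ) ≤ 1 := by rw [hrR]; exact (div_le_one hpow0).mpr hαn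
  have hc0 : (0:ℝ) ≤ α⁻¹ := inv_nonneg.mpr hα.le
  set M : ((Fin k → Fin n) → ℕ) → ℝ := fun X => Finset.univ.sup' Finset.univ_nonempty
    (fun σ : Fin n → Bool => α⁻¹ * ∑ e : Fin k → Fin n, (X e : ℝ) * fe e σ) with hM
  show poisMultMeasure n k α {X | x ≤ |M X - ∫ Y, M Y ∂ poisMultMeasure n k α|}
      ≤ ENNReal.ofReal (2 * Real.exp (-(x ^ 2 * α) / (4 * ((n : ℝ) + x))))
  set EM := ∫ Y, M Y ∂ poisMultMeasure n k α with hEM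
  -- Lipschitz property of M
  have hlipM : ∀ X Y : (Fin k → Fin n) → ℕ,
      |M X - M Y| ≤ α⁻¹ * ∑ e : Fin k → Fin n, |(X e:ℝ) - (Y e:ℝ)| := by
    intro X Y
    apply abs_sup'_sub_sup'_le
    intro σ _
    rw [← mul_sub, ← Finset.sum_sub_distrib, abs_mul, abs_of_nonneg hc0]
    apply mul_le_mul_of_nonneg_left _ hc0
    calc |∑ e : Fin k → Fin n, ((X e:ℝ) * fe e σ - (Y e:ℝ) * fe e σ)|
        ≤ ∑ e : Fin k → Fin n, |(X e:ℝ) * fe e σ - (Y e:ℝ) * fe e σ| :=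
          Finset.abs_sum_le_sum_abs _ _
      _ ≤ ∑ e : Fin k → Fin n, |(X e:ℝ) - (Y e:ℝ)| := by
          apply Finset.sum_le_sum
          intro e _
          rw [← sub_mul, abs_mul]
          have hf : |fe e σ| ≤ 1 := abs_le.mpr ⟨(hfe e σ).1, (hfe e σ).2⟩
          nlinarith [abs_nonneg ((X e:ℝ) - (Y e:ℝ))]
  -- transport to Fin N
  set eqv : Fin (Fintype.card (Fin k → Fin n)) ≃ (Fin k → Fin n) :=
    (Fintype.equivFin (Fin k → Fin n)).symm with heqv
  set E := MeasurableEquiv.piCongrLeft (fun _ : (Fin k → Fin n) => ℕ) eqv with hE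
  have MP : MeasurePreserving E (pim r (Fintype.card (Fin k → Fin n))) (poisMultMeasure n k α) :=
    measurePreserving_piCongrLeft (fun _ : (Fin k → Fin n) => (poissonPMF r).toMeasure) eqv
  have hEapp : ∀ (z : Fin (Fintype.card (Fin k → Fin n)) → ℕ) (i), E z (eqv i) = z i := by
    intro z i
    rw [hE, MeasurableEquiv.coe_piCongrLeft]
    exact Equiv.piCongrLeft_apply_apply (fun _ : (Fin k → Fin n) => ℕ) eqv z i
  have hLF : ∀ z w : Fin (Fintype.card (Fin k → Fin n)) → ℕ,
      |M (E z) - M (E w)| ≤ α⁻¹ * ∑ i, |(z i:ℝ) - (w i:ℝ)| := by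
    intro z w
    refine (hlipM (E z) (E w)).trans_eq ?_
    congr 1
    rw [← Equiv.sum_comp eqv (fun e => |((E z) e : ℝ) - ((E w) e : ℝ)|)]
    apply Finset.sum_congr rfl
    intro i _
    rw [hEapp z i, hEapp w i]
  have hLF' : ∀ z w : Fin (Fintype.card (Fin k → Fin n)) → ℕ,
      |(-(M (E z))) - (-(M (E w)))| ≤ α⁻¹ * ∑ i, |(z i:ℝ) - (w i:ℝ)| := by
    intro z w
    rw [show (-(M (E z))) - (-(M (E w))) = -(M (E z) - M (E w)) by ring, abs_neg]
    exact hLF z w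
  have hFmean : ∫ z, M (E z) ∂(pim r (Fintype.card (Fin k → Fin n))) = EM := by
    rw [hEM]
    exact MP.integral_comp E.measurableEmbedding M
  -- choice of t
  have hnx : (0:ℝ) < (n:ℝ) + x := by linarith
  set s : ℝ := x / (2*((n:ℝ)+x)) with hsdef
  have hs0 : 0 ≤ s := by positivity
  have hs2 : 2*s ≤ 1 := by
    rw [hsdef]
    rw [show 2*(x / (2*((n:ℝ)+x))) = x / ((n:ℝ)+x) by field_simp]
    rw [div_le_one hnx]
    linarith
  set t : ℝ := α * s with htdef
  have ht0 : 0 ≤ t := mul_nonneg hα.le hs0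
  -- two tails
  have hup := tail_bound r hc0 ht0 _ (fun z => M (E z)) hLF x
  have hdo := tail_bound r hc0 ht0 _ (fun z => -(M (E z))) hLF' x
  rw [hFmean] at hup
  have hIB : ∫ w, -(M (E w)) ∂(pim r (Fintype.card (Fin k → Fin n))) = -EM := by
    rw [integral_neg, hFmean]
  rw [hIB] at hdo
  -- measure of the two-sided set
  set S : Set ((Fin k → Fin n) → ℕ) := {X | x ≤ |M X - EM|} with hS
  have hSm : MeasurableSet S := (Set.to_countable S).measurableSet
  have hμS : poisMultMeasure n k α S
      = pim r (Fintype.card (Fin k → Fin n)) (⇑E ⁻¹' S) := by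
    rw [← MP.map_eq, Measure.map_apply E.measurable hSm]
  have hsub : ⇑E ⁻¹' S ⊆ {z | x ≤ M (E z) - EM} ∪ {z | x ≤ -(M (E z)) - (-EM)} := by
    intro z hz
    have hz' : x ≤ |M (E z) - EM| := hz
    rcases le_abs.mp hz' with h | h
    · left; exact h
    · right
      simp only [Set.mem_setOf_eq]
      linarith
  have hbound : poisMultMeasure n k α S
      ≤ ENNReal.ofReal (Real.exp ((Fintype.card (Fin k → Fin n) : ℝ) * pB r α⁻¹ t - t * x))
        + ENNReal.ofReal (Real.exp ((Fintype.card (Fin k → Fin n) : ℝ) * pB r α⁻¹ t - t * x)) := by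
    rw [hμS]
    refine (measure_mono hsub).trans ?_
    refine (measure_union_le _ _).trans ?_
    exact add_le_add hup hdo
  refine hbound.trans ?_
  rw [← ENNReal.ofReal_add (Real.exp_pos _).le (Real.exp_pos _).le]
  apply ENNReal.ofReal_le_ofReal
  rw [← two_mul]
  apply mul_le_mul_of_nonneg_left _ (by norm_num : (0:ℝ) ≤ 2)
  apply Real.exp_le_exp.mpr
  -- the analytic optimization
  have hNr : (Fintype.card (Fin k → Fin n) : ℝ) * (r:ℝ) = α * n := by
    have hcard : Fintype.card (Fin k → Fin n) = n ^ k := by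
      rw [Fintype.card_fun, Fintype.card_fin, Fintype.card_fin]
    rw [hcard, hrR]
    have hk1 : k - 1 + 1 = k := Nat.succ_pred_eq_of_pos hk
    have hpowk : (n:ℝ)^k = (n:ℝ)^(k-1) * (n:ℝ) := by rw [← hk1, pow_succ]; rw [hk1]
    push_cast
    rw [hpowk]
    field_simp
  have h1s : (1 - 2*s) * ((n:ℝ) + x) = n := by
    rw [hsdef]; field_simp; ring
  have hsx : s * x = 2 * (x^2 / (4*((n:ℝ)+x))) := by
    rw [hsdef]; field_simp; ring
  have hs6 : ((n:ℝ) + x) * s^2 = x^2 / (4*((n:ℝ)+x)) := by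
    rw [hsdef]; field_simp; ring
  have := final_core (n:ℝ) x α (Fintype.card (Fin k → Fin n) : ℝ) r s hα hx
    (Nat.cast_nonneg _) hr1 hNr hs0 hs2 hnx h1s hsx hs6
  rw [htdef]
  exact this

end
end

section
/- Let f : ℕ → ℝ satisfy |f(j)| ≤ C·K^j for some constants C, K > 0. Then the function λ ↦ E_{X∼Poisson(λ)}[f(X)] = Σ_{j=0}^∞ f(j)·e^{−λ}·λ^j/j! is differentiable on (0,∞), and its derivative at λ equals E_{X∼Poisson(λ)}[f(X+1) − f(X)]. -/
lemma summable_aux (a : ℕ → ℝ) (C M : ℝ)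
    (h : ∀ j, |a j| ≤ C * M ^ j / Nat.factorial j) : Summable a := by
  refine Summable.of_norm_bounded (((Real.summable_pow_div_factorial M).mul_left C)) ?_
  intro j
  simpa [Real.norm_eq_abs, mul_div_assoc] using h j

/-- If `|f j| ≤ C K^j`, then `λ ↦ E_{X ~ Poisson(λ)}[f X]` is differentiable
on `(0,∞)` with derivative `E_{X ~ Poisson(λ)}[f (X+1) − f X]`. -/
theorem poisson_derivative (f : ℕ → ℝ) (C K : ℝ) (hC : 0 < C) (hK : 0 < K)
    (hf : ∀ j, |f j| ≤ C * K ^ j) (lam : ℝ) (hlam : 0 < lam) :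
    HasDerivAt (fun l : ℝ => ∑' j : ℕ, f j * Real.exp (-l) * l ^ j / (Nat.factorial j))
      (∑' j : ℕ, (f (j + 1) - f j) * Real.exp (-lam) * lam ^ j / (Nat.factorial j)) lam := by
  set b : ℝ := lam + 1 with hb
  have hb1 : (1:ℝ) ≤ b := by linarith
  have hb0 : (0:ℝ) < b := by linarith
  set D : ℕ → ℝ → ℝ := fun j l =>
    f j * (Real.exp (-l) * (j * l ^ (j - 1)) - Real.exp (-l) * l ^ j) / Nat.factorial j with hD
  set u : ℕ → ℝ := fun j => 2 * C * (2 * K * b) ^ j / Nat.factorial j with hu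
  have hderiv : ∀ j : ℕ, ∀ l : ℝ, l ∈ Set.Ioo (0:ℝ) b →
      HasDerivAt (fun l : ℝ => f j * Real.exp (-l) * l ^ j / Nat.factorial j) (D j l) l := by
    intro j l _
    have h1 : HasDerivAt (fun l : ℝ => Real.exp (-l)) (-Real.exp (-l)) l := by
      exact ((Real.hasDerivAt_exp (-l)).comp l (hasDerivAt_neg l)).congr_deriv (by simp)
    have h2 : HasDerivAt (fun l : ℝ => l ^ j) ((j:ℝ) * l ^ (j - 1)) l := hasDerivAt_pow j l
    have h3 : HasDerivAt (fun l : ℝ => f j * (Real.exp (-l) * l ^ j) / Nat.factorial j)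
        (f j * (-Real.exp (-l) * l ^ j + Real.exp (-l) * ((j:ℝ) * l ^ (j-1))) / Nat.factorial j)
        l := ((h1.mul h2).const_mul (f j)).div_const _
    have h4 : (fun l : ℝ => f j * Real.exp (-l) * l ^ j / Nat.factorial j)
        = (fun l : ℝ => f j * (Real.exp (-l) * l ^ j) / Nat.factorial j) := by
      funext x; ring
    rw [h4]
    convert h3 using 1
    rw [hD]; ring
  -- bound on a general j-th term quantity
  have hfj : ∀ j, (0:ℝ) ≤ C * K ^ j := fun j => by positivity
  have key2 : ∀ j : ℕ, ∀ l : ℝ, 0 < l → l < b →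
      Real.exp (-l) * ((j:ℝ) * l ^ (j - 1)) ≤ 2 ^ j * b ^ j ∧
      Real.exp (-l) * l ^ j ≤ b ^ j := by
    intro j l hl0 hlb
    have hexp : Real.exp (-l) ≤ 1 := Real.exp_le_one_iff.2 (by linarith)
    have hlpow : ∀ k : ℕ, l ^ k ≤ b ^ k := fun k => pow_le_pow_left₀ hl0.le hlb.le k
    have hbpow : b ^ (j-1) ≤ b ^ j := pow_le_pow_right₀ hb1 (Nat.sub_le j 1)
    have hj2 : ((j:ℝ)) ≤ 2 ^ j := by
      exact_mod_cast (Nat.lt_two_pow_self (n := j)).le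
    constructor
    · calc Real.exp (-l) * ((j:ℝ) * l ^ (j-1)) ≤ 1 * ((j:ℝ) * b ^ j) := by
            gcongr
            exact le_trans (hlpow _) hbpow
        _ ≤ 2 ^ j * b ^ j := by
            rw [one_mul]; gcongr
    · calc Real.exp (-l) * l ^ j ≤ 1 * b ^ j := by gcongr
        _ = b ^ j := one_mul _
  have hbound : ∀ j : ℕ, ∀ l : ℝ, l ∈ Set.Ioo (0:ℝ) b → ‖D j l‖ ≤ u j := by
    intro j l hl
    obtain ⟨hl0, hlb⟩ := hl
    obtain ⟨k1, k2⟩ := key2 j l hl0 hlb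
    have key : |Real.exp (-l) * (j * l ^ (j - 1)) - Real.exp (-l) * l ^ j|
        ≤ 2 ^ j * b ^ j + b ^ j := by
      refine le_trans (abs_sub _ _) ?_
      apply add_le_add
      · rw [abs_of_nonneg (by positivity)]; exact k1
      · rw [abs_of_nonneg (by positivity)]; exact k2
    rw [Real.norm_eq_abs, hD]
    simp only [abs_div, abs_mul, Nat.abs_cast]
    rw [hu, div_le_div_iff₀ (by positivity) (by positivity)]
    calc |f j| * |Real.exp (-l) * (↑j * l ^ (j - 1)) - Real.exp (-l) * l ^ j| * (Nat.factorial j)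
        ≤ (C * K ^ j) * (2 ^ j * b ^ j + b ^ j) * (Nat.factorial j) :=
          mul_le_mul_of_nonneg_right
            (mul_le_mul (hf j) key (abs_nonneg _) (hfj j)) (by positivity)
      _ ≤ (C * K ^ j) * (2 ^ j * b ^ j + 2 ^ j * b ^ j) * (Nat.factorial j) := by
          have h2j : (1:ℝ) ≤ 2 ^ j := one_le_pow₀ (by norm_num)
          have : b ^ j ≤ 2 ^ j * b ^ j := by nlinarith [pow_pos hb0 j]
          gcongr
      _ = 2 * C * (2 * K * b) ^ j * (Nat.factorial j) := by rw [mul_pow, mul_pow]; ring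
  have hu_sum : Summable u := by
    simpa [hu, mul_div_assoc] using
      (Real.summable_pow_div_factorial (2 * K * b)).mul_left (2 * C)
  have hE1 : Real.exp (-lam) ≤ 1 := Real.exp_le_one_iff.2 (by linarith)
  have hE0 : (0:ℝ) < Real.exp (-lam) := Real.exp_pos _
  have hlb : lam < b := by rw [hb]; linarith
  have hlpow : ∀ k : ℕ, lam ^ k ≤ b ^ k := fun k => pow_le_pow_left₀ hlam.le hlb.le k
  have hB : Summable (fun j : ℕ => f j * Real.exp (-lam) * lam ^ j / Nat.factorial j) := by
    apply summable_aux _ C (K * b)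
    intro j
    rw [abs_div, abs_of_nonneg (by positivity : (0:ℝ) ≤ (Nat.factorial j : ℝ))]
    gcongr
    calc |f j * Real.exp (-lam) * lam ^ j| = |f j| * Real.exp (-lam) * lam ^ j := by
          rw [abs_mul, abs_mul, abs_of_nonneg hE0.le, abs_of_nonneg (by positivity : (0:ℝ) ≤ lam ^ j)]
      _ ≤ (C * K ^ j) * 1 * b ^ j :=
          mul_le_mul (mul_le_mul (hf j) hE1 hE0.le (hfj j)) (hlpow j)
            (by positivity) (by positivity)
      _ = C * (K * b) ^ j := by rw [mul_pow]; ring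
  have hA : Summable (fun j : ℕ => f (j+1) * Real.exp (-lam) * lam ^ j / Nat.factorial j) := by
    apply summable_aux _ (C * K) (K * b)
    intro j
    rw [abs_div, abs_of_nonneg (by positivity : (0:ℝ) ≤ (Nat.factorial j : ℝ))]
    gcongr
    calc |f (j+1) * Real.exp (-lam) * lam ^ j| = |f (j+1)| * Real.exp (-lam) * lam ^ j := by
          rw [abs_mul, abs_mul, abs_of_nonneg hE0.le, abs_of_nonneg (by positivity : (0:ℝ) ≤ lam ^ j)]
      _ ≤ (C * K ^ (j+1)) * 1 * b ^ j :=
          mul_le_mul (mul_le_mul (hf (j+1)) hE1 hE0.le (hfj (j+1))) (hlpow j)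
            (by positivity) (by positivity)
      _ = C * K * (K * b) ^ j := by rw [mul_pow, pow_succ]; ring
  have hT : Summable (fun j : ℕ =>
      f j * (Real.exp (-lam) * ((j:ℝ) * lam ^ (j - 1))) / Nat.factorial j) := by
    apply summable_aux _ C (2 * K * b)
    intro j
    rw [abs_div, abs_of_nonneg (by positivity : (0:ℝ) ≤ (Nat.factorial j : ℝ))]
    gcongr
    have k1 := (key2 j lam hlam hlb).1
    calc |f j * (Real.exp (-lam) * ((j:ℝ) * lam ^ (j - 1)))|
        = |f j| * (Real.exp (-lam) * ((j:ℝ) * lam ^ (j - 1))) := by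
          rw [abs_mul, abs_of_nonneg (show (0:ℝ) ≤ Real.exp (-lam) * ((j:ℝ) * lam ^ (j - 1))
            from by positivity)]
      _ ≤ (C * K ^ j) * (2 ^ j * b ^ j) := mul_le_mul (hf j) k1 (by positivity) (hfj j)
      _ = C * (2 * K * b) ^ j := by rw [mul_pow, mul_pow]; ring
  have hlam_mem : lam ∈ Set.Ioo (0:ℝ) b := ⟨hlam, hlb⟩
  have main := hasDerivAt_tsum_of_isPreconnected hu_sum isOpen_Ioo
    isPreconnected_Ioo hderiv hbound hlam_mem hB hlam_mem
  have hTA : (∑' j : ℕ, f j * (Real.exp (-lam) * ((j:ℝ) * lam ^ (j - 1))) / Nat.factorial j)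
      = ∑' j : ℕ, f (j+1) * Real.exp (-lam) * lam ^ j / Nat.factorial j := by
    rw [Summable.tsum_eq_zero_add hT]
    simp only [Nat.cast_zero, zero_mul, mul_zero, zero_div, zero_add, Nat.cast_ofNat]
    apply tsum_congr
    intro j
    have hfac : ((Nat.factorial j : ℝ)) ≠ 0 := Nat.cast_ne_zero.2 (Nat.factorial_ne_zero j)
    have hj1 : ((j:ℝ) + 1) ≠ 0 := by positivity
    rw [Nat.add_sub_cancel, Nat.factorial_succ]
    push_cast
    field_simp
  have hid : (∑' j : ℕ, (f (j + 1) - f j) * Real.exp (-lam) * lam ^ j / (Nat.factorial j))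
      = ∑' j : ℕ, D j lam := by
    calc (∑' j : ℕ, (f (j + 1) - f j) * Real.exp (-lam) * lam ^ j / (Nat.factorial j))
        = ∑' j : ℕ, (f (j+1) * Real.exp (-lam) * lam ^ j / Nat.factorial j
            - f j * Real.exp (-lam) * lam ^ j / Nat.factorial j) :=
          tsum_congr (fun j => by ring)
      _ = (∑' j : ℕ, f (j+1) * Real.exp (-lam) * lam ^ j / Nat.factorial j)
            - ∑' j : ℕ, f j * Real.exp (-lam) * lam ^ j / Nat.factorial j := Summable.tsum_sub hA hB
      _ = (∑' j : ℕ, f j * (Real.exp (-lam) * ((j:ℝ) * lam ^ (j - 1))) / Nat.factorial j)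
            - ∑' j : ℕ, f j * Real.exp (-lam) * lam ^ j / Nat.factorial j := by rw [hTA]
      _ = ∑' j : ℕ, (f j * (Real.exp (-lam) * ((j:ℝ) * lam ^ (j - 1))) / Nat.factorial j
            - f j * Real.exp (-lam) * lam ^ j / Nat.factorial j) := (Summable.tsum_sub hT hB).symm
      _ = ∑' j : ℕ, D j lam := tsum_congr (fun j => by rw [hD]; ring)
  rw [hid]
  exact main
end
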